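/- Let H = L²(D, μ) where D is the closed upper half unit disk in ℂ and dμ = s^m dA with s = Im ζ and m ≥ 2 a fixed integer. Define u_k(ζ) = √(8k+2) ζ^{4k}. Then (u_k) is a bounded sequence in L²(D, dA), the sequence (s^{-1} u_k) is bounded in L²(D, s^m dA) provided m ≥ 2, and ‖u_k - u_j‖²_{L²(D, s^m dA)} ≥ (√2/4)^m · π/8 for k ≠ j. -/

import Mathlib

open MeasureTheory Complex Real Set

/-- The closed upper half unit disk `D = {ζ ∈ ℂ : |ζ| ≤ 1, Im ζ ≥ 0}`. -/
def upperHalfDisk : Set ℂ := {ζ : ℂ | ‖ζ‖ ≤ 1 ∧ 0 ≤ ζ.im}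

/-- `u_k(ζ) = √(8k+2) ζ^{4k}`. -/
noncomputable def useq (k : ℕ) (ζ : ℂ) : ℂ :=
  (Real.sqrt (8*k + 2) : ℂ) * ζ ^ (4*k)

lemma uhd_closed : IsClosed upperHalfDisk := by
  have : upperHalfDisk = (fun z : ℂ => ‖z‖) ⁻¹' Iic 1 ∩ Complex.im ⁻¹' Ici 0 := rfl
  rw [this]
  exact (isClosed_Iic.preimage continuous_norm).inter
    (isClosed_Ici.preimage Complex.continuous_im)

lemma uhd_compact : IsCompact upperHalfDisk := by
  apply Metric.isCompact_of_isClosed_isBounded uhd_closed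
  apply (Metric.isBounded_closedBall (x := (0:ℂ)) (r := 1)).subset
  intro z hz
  simpa [Metric.mem_closedBall, Complex.dist_eq] using hz.1

/-- master polar-coordinates lemma for set integrals -/
lemma polar_setIntegral (S : Set ℂ) (hS : MeasurableSet S) (T : Set (ℝ × ℝ))
    (hT : MeasurableSet T) (hsub : T ⊆ Complex.polarCoord.target)
    (hST : ∀ p ∈ Complex.polarCoord.target, (Complex.polarCoord.symm p ∈ S ↔ p ∈ T))
    (g : ℂ → ℝ) :
    ∫ z in S, g z = ∫ p in T, p.1 * g (Complex.polarCoord.symm p) := by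
  rw [← integral_indicator hS, ← Complex.integral_comp_polarCoord_symm (S.indicator g)]
  have hsub' : T ⊆ polarCoord.target := hsub
  rw [setIntegral_congr_fun (by exact measurableSet_Ioi.prod measurableSet_Ioo)
    (g := T.indicator (fun p => p.1 * g (Complex.polarCoord.symm p)))]
  · rw [setIntegral_indicator hT, inter_eq_self_of_subset_right hsub']
  · intro p hp
    by_cases h : p ∈ T <;> dsimp only
    · rw [indicator_of_mem h, indicator_of_mem ((hST p hp).2 h), smul_eq_mul]
    · rw [indicator_of_notMem h, indicator_of_notMem (fun hmem => h ((hST p hp).1 hmem)),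
        smul_zero]

lemma sin_sqrt2_iff (θ : ℝ) (h1 : -π < θ) (h2 : θ < π) :
    Real.sqrt 2 / 2 ≤ Real.sin θ ↔ θ ∈ Icc (π/4) (3*π/4) := by
  have hpi := Real.pi_pos
  have hmono := Real.strictMonoOn_sin.monotoneOn
  constructor
  · intro h
    have hs2 : (0:ℝ) < Real.sqrt 2 / 2 := by positivity
    have hsinpos : 0 < Real.sin θ := lt_of_lt_of_le hs2 h
    have hθpos : 0 < θ := by
      by_contra hc
      push_neg at hc
      rcases eq_or_lt_of_le hc with he | hlt
      · rw [he] at hsinpos; simp at hsinpos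
      · exact absurd hsinpos (not_lt.2 (Real.sin_neg_of_neg_of_neg_pi_lt hlt h1).le)
    constructor
    · by_contra hc
      push_neg at hc
      have := Real.strictMonoOn_sin (Set.mem_Icc.2 ⟨by linarith, by linarith⟩)
        (Set.mem_Icc.2 ⟨by linarith, by linarith⟩) hc
      rw [Real.sin_pi_div_four] at this; linarith
    · by_contra hc
      push_neg at hc
      have h3 := Real.strictMonoOn_sin (Set.mem_Icc.2 ⟨by linarith, by linarith⟩)
        (Set.mem_Icc.2 (⟨by linarith, by linarith⟩ : -(π/2) ≤ π/4 ∧ π/4 ≤ π/2)) (by linarith : π - θ < π/4)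
      rw [Real.sin_pi_sub, Real.sin_pi_div_four] at h3; linarith
  · rintro ⟨ha, hb⟩
    rcases le_total θ (π/2) with hle | hge
    · have := hmono (Set.mem_Icc.2 ⟨by linarith, by linarith⟩)
        (Set.mem_Icc.2 ⟨by linarith, by linarith⟩) ha
      rwa [Real.sin_pi_div_four] at this
    · have := hmono (Set.mem_Icc.2 (⟨by linarith, by linarith⟩ : -(π/2) ≤ π/4 ∧ π/4 ≤ π/2))
        (Set.mem_Icc.2 ⟨by linarith, by linarith⟩) (by linarith : π/4 ≤ π - θ)
      rw [Real.sin_pi_sub, Real.sin_pi_div_four] at this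
      linarith

lemma sin_nonneg_iff_mem (θ : ℝ) (h1 : -π < θ) (h2 : θ < π) :
    0 ≤ Real.sin θ ↔ θ ∈ Ico (0:ℝ) π := by
  constructor
  · intro h
    refine ⟨?_, h2⟩
    by_contra hneg
    push_neg at hneg
    exact absurd h (not_le.2 (Real.sin_neg_of_neg_of_neg_pi_lt hneg h1))
  · rintro ⟨h0, _⟩
    exact Real.sin_nonneg_of_nonneg_of_le_pi h0 h2.le

lemma polar_symm_im (p : ℝ × ℝ) : (Complex.polarCoord.symm p).im = p.1 * Real.sin p.2 := by
  simp [Complex.polarCoord_symm_apply, Complex.sin_ofReal_re]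

lemma polar_symm_exp (p : ℝ × ℝ) :
    Complex.polarCoord.symm p = (p.1 : ℂ) * Complex.exp (p.2 * Complex.I) := by
  rw [Complex.polarCoord_symm_apply, Complex.exp_mul_I]
  norm_num [Complex.ofReal_cos, Complex.ofReal_sin]

lemma pow_polar (n : ℕ) (p : ℝ × ℝ) :
    (Complex.polarCoord.symm p) ^ n = ((p.1 ^ n : ℝ) : ℂ) * Complex.exp (((n * p.2 : ℝ)) * Complex.I) := by
  rw [polar_symm_exp, mul_pow, ← Complex.exp_nat_mul]
  push_cast
  ring_nf

lemma norm_useq_polar (k : ℕ) (p : ℝ × ℝ) (hp : 0 < p.1) :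
    ‖useq k (Complex.polarCoord.symm p)‖ ^ 2 = (8*k+2) * p.1 ^ (8*k) := by
  rw [useq, norm_mul, norm_pow,
    Complex.norm_polarCoord_symm, abs_of_pos hp, Complex.norm_real, Real.norm_eq_abs,
    _root_.abs_of_nonneg (Real.sqrt_nonneg _)]
  rw [mul_pow, ← pow_mul, Real.sq_sqrt (by positivity), show 4*k*2 = 8*k by ring]

lemma re_mul_conj_exp (a b x y : ℝ) :
    ((a:ℂ) * Complex.exp ((x:ℂ) * Complex.I) * (starRingEnd ℂ) ((b:ℂ) * Complex.exp ((y:ℂ) * Complex.I))).re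
      = a * b * Real.cos (x - y) := by
  rw [map_mul, Complex.conj_ofReal, ← Complex.exp_conj]
  rw [show (starRingEnd ℂ) ((y:ℂ) * Complex.I) = ((-y : ℝ):ℂ) * Complex.I by
    rw [map_mul, Complex.conj_ofReal, Complex.conj_I]; push_cast; ring]
  rw [show (a:ℂ) * Complex.exp ((x:ℂ)*Complex.I) * ((b:ℂ) * Complex.exp (((-y:ℝ):ℂ)*Complex.I))
      = ((a*b : ℝ):ℂ) * (Complex.exp ((x:ℂ)*Complex.I) * Complex.exp (((-y:ℝ):ℂ)*Complex.I)) by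
    push_cast; ring]
  rw [← Complex.exp_add, show ((x:ℂ))*Complex.I + ((-y:ℝ):ℂ)*Complex.I = ((x - y : ℝ):ℂ)*Complex.I by
    push_cast; ring]
  rw [Complex.re_ofReal_mul, Complex.exp_ofReal_mul_I_re]

lemma useq_polar_form (k : ℕ) (p : ℝ × ℝ) :
    useq k (Complex.polarCoord.symm p)
      = ((Real.sqrt (8*k+2) * p.1 ^ (4*k) : ℝ) : ℂ)
        * Complex.exp (((((4*k : ℕ) : ℝ) * p.2 : ℝ) : ℂ) * Complex.I) := by
  rw [useq, pow_polar]
  push_cast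
  ring

lemma cross_polar (k j : ℕ) (p : ℝ × ℝ) :
    (useq k (Complex.polarCoord.symm p) * (starRingEnd ℂ) (useq j (Complex.polarCoord.symm p))).re
      = (Real.sqrt (8*k+2) * Real.sqrt (8*j+2) * p.1 ^ (4*k+4*j))
          * Real.cos (((4*k : ℝ) - 4*j) * p.2) := by
  rw [useq_polar_form, useq_polar_form, re_mul_conj_exp]
  rw [show (((4*k : ℕ) : ℝ) * p.2 : ℝ) - (((4*j : ℕ) : ℝ) * p.2 : ℝ) = ((4*k:ℝ) - 4*j) * p.2 by
    push_cast; ring]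
  rw [pow_add]
  ring

lemma integral_r_pow (a : ℝ) (ha1 : a ≤ 1) (n : ℕ) :
    ∫ r in Ioc a 1, r ^ n = (1 - a^(n+1)) / ((n:ℝ)+1) := by
  rw [← intervalIntegral.integral_of_le ha1, integral_pow]
  norm_num

lemma integral_cos_sector (c : ℝ) (hc : c ≠ 0) (a b : ℝ) (hab : a ≤ b) :
    ∫ θ in Icc a b, Real.cos (c*θ) = (Real.sin (c*b) - Real.sin (c*a)) / c := by
  rw [MeasureTheory.integral_Icc_eq_integral_Ioc, ← intervalIntegral.integral_of_le hab,
    intervalIntegral.integral_comp_mul_left (fun x => Real.cos x) hc,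
    integral_cos, smul_eq_mul]
  field_simp

lemma norm_sub_sq_cx (a b : ℂ) :
    ‖a - b‖^2 = ‖a‖^2 + ‖b‖^2 - 2 * (a * (starRingEnd ℂ) b).re := by
  rw [Complex.sq_norm, Complex.sq_norm, Complex.sq_norm]
  simp only [Complex.normSq_apply, Complex.mul_re, Complex.sub_re, Complex.sub_im,
    Complex.conj_re, Complex.conj_im]
  ring

lemma iff_TD (p : ℝ × ℝ) (hp : p ∈ Complex.polarCoord.target) :
    (Complex.polarCoord.symm p ∈ upperHalfDisk ↔ p ∈ Ioc (0:ℝ) 1 ×ˢ Ico (0:ℝ) π) := by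
  rw [Complex.polarCoord_target, Set.mem_prod] at hp
  obtain ⟨hr, hθ⟩ := hp
  rw [Set.mem_prod]
  show (‖_‖ ≤ 1 ∧ 0 ≤ (Complex.polarCoord.symm p).im) ↔ _
  rw [Complex.norm_polarCoord_symm, polar_symm_im, _root_.abs_of_pos hr]
  constructor
  · rintro ⟨h1, h2⟩
    have hs : 0 ≤ Real.sin p.2 := nonneg_of_mul_nonneg_right h2 hr
    exact ⟨⟨hr, h1⟩, (sin_nonneg_iff_mem _ hθ.1 hθ.2).1 hs⟩
  · rintro ⟨⟨h0, h1⟩, hθ'⟩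
    exact ⟨h1, mul_nonneg (le_of_lt hr) ((sin_nonneg_iff_mem _ hθ.1 hθ.2).2 hθ')⟩

def sectorE : Set ℂ :=
  {ζ : ℂ | ‖ζ‖ ≤ 1 ∧ 1/2 < ‖ζ‖ ∧ Real.sqrt 2 / 2 * ‖ζ‖ ≤ ζ.im}

lemma sectorE_meas : MeasurableSet sectorE := by
  have hc : Measurable fun ζ : ℂ => ‖ζ‖ := continuous_norm.measurable
  have h1 : MeasurableSet {ζ : ℂ | ‖ζ‖ ≤ 1} := measurableSet_le hc measurable_const
  have h2 : MeasurableSet {ζ : ℂ | 1/2 < ‖ζ‖} := measurableSet_lt measurable_const hc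
  have h3 : MeasurableSet {ζ : ℂ | Real.sqrt 2 / 2 * ‖ζ‖ ≤ ζ.im} :=
    measurableSet_le (hc.const_mul _) Complex.measurable_im
  exact h1.inter (h2.inter h3)

lemma sectorE_sub : sectorE ⊆ upperHalfDisk := fun ζ h => ⟨h.1, le_trans (by positivity) h.2.2⟩

lemma iff_TE (p : ℝ × ℝ) (hp : p ∈ Complex.polarCoord.target) :
    (Complex.polarCoord.symm p ∈ sectorE ↔ p ∈ Ioc (1/2:ℝ) 1 ×ˢ Icc (π/4) (3*π/4)) := by
  rw [Complex.polarCoord_target, Set.mem_prod] at hp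
  obtain ⟨hr, hθ⟩ := hp
  rw [Set.mem_prod]
  show (_ ∧ _ ∧ _) ↔ _
  rw [Complex.norm_polarCoord_symm, polar_symm_im, _root_.abs_of_pos hr]
  have hrpos : (0:ℝ) < p.1 := hr
  constructor
  · rintro ⟨h1, h2, h3⟩
    have hs : Real.sqrt 2 / 2 ≤ Real.sin p.2 :=
      (mul_le_mul_iff_right₀ hrpos).1 (by linarith)
    exact ⟨⟨h2, h1⟩, (sin_sqrt2_iff _ hθ.1 hθ.2).1 hs⟩
  · rintro ⟨⟨h2, h1⟩, hθ'⟩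
    have hs := (sin_sqrt2_iff _ hθ.1 hθ.2).2 hθ'
    exact ⟨h1, h2, by nlinarith⟩

lemma key1 (k : ℕ) : ∫ ζ in upperHalfDisk, ‖useq k ζ‖^2 ∂volume = π := by
  have hTDm : MeasurableSet (Ioc (0:ℝ) 1 ×ˢ Ico (0:ℝ) π) :=
    measurableSet_Ioc.prod measurableSet_Ico
  have hsub : (Ioc (0:ℝ) 1 ×ˢ Ico (0:ℝ) π) ⊆ Complex.polarCoord.target := by
    rw [Complex.polarCoord_target]
    rintro p ⟨h1, h2⟩
    exact ⟨h1.1, ⟨by linarith [Real.pi_pos, h2.1], h2.2⟩⟩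
  rw [polar_setIntegral _ uhd_closed.measurableSet _ hTDm hsub iff_TD,
    setIntegral_congr_fun hTDm (g := fun p => ((8*(k:ℝ)+2) * p.1^(8*k+1)) * (1:ℝ)) ?_]
  · rw [Measure.volume_eq_prod,
      setIntegral_prod_mul (f := fun r : ℝ => (8*(k:ℝ)+2) * r^(8*k+1)) (g := fun _ : ℝ => (1:ℝ)),
      MeasureTheory.integral_const_mul,
      integral_r_pow 0 zero_le_one (8*k+1), setIntegral_const, Real.volume_real_Ico_of_le (by linarith [Real.pi_pos]), smul_eq_mul]
    rw [zero_pow (by omega : 8*k+1+1 ≠ 0)]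
    push_cast
    have h8 : (8*(k:ℝ)+2) ≠ 0 := by positivity
    field_simp
    ring
  · intro p hp
    dsimp only
    rw [norm_useq_polar k p hp.1.1]
    ring

lemma key3 (k j : ℕ) (hlt : j < k) :
    3*π/4 ≤ ∫ ζ in sectorE, ‖useq k ζ - useq j ζ‖^2 ∂volume := by
  have hpi := Real.pi_pos
  have hTEm : MeasurableSet (Ioc (1/2:ℝ) 1 ×ˢ Icc (π/4) (3*π/4)) :=
    measurableSet_Ioc.prod measurableSet_Icc
  have hsub : (Ioc (1/2:ℝ) 1 ×ˢ Icc (π/4) (3*π/4)) ⊆ Complex.polarCoord.target := by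
    rw [Complex.polarCoord_target]
    rintro p ⟨h1, h2⟩
    exact ⟨lt_trans (by norm_num) h1.1, ⟨by linarith [h2.1], by linarith [h2.2]⟩⟩
  have hc : ((4*k:ℝ) - 4*j) ≠ 0 := by
    have : (4*(j:ℝ)) < 4*(k:ℝ) := by
      have : (j:ℝ) < (k:ℝ) := by exact_mod_cast hlt
      linarith
    intro h; rw [sub_eq_zero] at h; linarith
  rw [polar_setIntegral _ sectorE_meas _ hTEm hsub iff_TE,
    setIntegral_congr_fun hTEm (g := fun p : ℝ × ℝ =>
      (((8*(k:ℝ)+2) * p.1^(8*k+1)) * (1:ℝ) + ((8*(j:ℝ)+2) * p.1^(8*j+1)) * (1:ℝ))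
        - (2 * Real.sqrt (8*(k:ℝ)+2) * Real.sqrt (8*(j:ℝ)+2) * p.1^(4*k+4*j+1))
          * Real.cos (((4*k:ℝ) - 4*j) * p.2)) ?_]
  · -- split and evaluate
    have hK : IsCompact (Icc (1/2:ℝ) 1 ×ˢ Icc (π/4) (3*π/4)) := isCompact_Icc.prod isCompact_Icc
    have hSK : (Ioc (1/2:ℝ) 1 ×ˢ Icc (π/4) (3*π/4)) ⊆ Icc (1/2:ℝ) 1 ×ˢ Icc (π/4) (3*π/4) :=
      Set.prod_mono Ioc_subset_Icc_self subset_rfl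
    have hint : ∀ f : ℝ × ℝ → ℝ, Continuous f →
        IntegrableOn f (Ioc (1/2:ℝ) 1 ×ˢ Icc (π/4) (3*π/4)) volume :=
      fun f hf => (hf.continuousOn.integrableOn_compact hK).mono_set hSK
    have h1 := hint (fun p => ((8*(k:ℝ)+2) * p.1^(8*k+1)) * (1:ℝ)) (by fun_prop)
    have h2 := hint (fun p => ((8*(j:ℝ)+2) * p.1^(8*j+1)) * (1:ℝ)) (by fun_prop)
    have h3 := hint (fun p =>
      (2 * Real.sqrt (8*(k:ℝ)+2) * Real.sqrt (8*(j:ℝ)+2) * p.1^(4*k+4*j+1))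
        * Real.cos (((4*k:ℝ) - 4*j) * p.2)) (by fun_prop)
    have hsub2 := integral_sub (h1.add h2) h3
    simp only [Pi.add_apply] at hsub2
    rw [hsub2, integral_add h1 h2]
    have hval : ∀ n : ℕ, (∫ p in Ioc (1/2:ℝ) 1 ×ˢ Icc (π/4) (3*π/4),
        ((8*(n:ℝ)+2) * p.1^(8*n+1)) * (1:ℝ) ∂volume) = (1 - (1/2:ℝ)^(8*n+2)) * (π/2) := by
      intro n
      rw [Measure.volume_eq_prod,
        setIntegral_prod_mul (f := fun r : ℝ => (8*(n:ℝ)+2) * r^(8*n+1)) (g := fun _ : ℝ => (1:ℝ)),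
        MeasureTheory.integral_const_mul, integral_r_pow _ (by norm_num) (8*n+1),
        setIntegral_const, Real.volume_real_Icc_of_le (by linarith), smul_eq_mul]
      have h8 : (8*(n:ℝ)+2) ≠ 0 := by positivity
      push_cast
      field_simp
      ring
    have hcross : (∫ p in Ioc (1/2:ℝ) 1 ×ˢ Icc (π/4) (3*π/4),
        (2 * Real.sqrt (8*(k:ℝ)+2) * Real.sqrt (8*(j:ℝ)+2) * p.1^(4*k+4*j+1))
          * Real.cos (((4*k:ℝ) - 4*j) * p.2) ∂volume) = 0 := by
      rw [Measure.volume_eq_prod,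
        setIntegral_prod_mul
          (f := fun r : ℝ => 2 * Real.sqrt (8*(k:ℝ)+2) * Real.sqrt (8*(j:ℝ)+2) * r^(4*k+4*j+1))
          (g := fun θ : ℝ => Real.cos (((4*k:ℝ) - 4*j) * θ)),
        integral_cos_sector _ hc _ _ (by linarith)]
      have hs1 : Real.sin (((4*k:ℝ) - 4*j) * (3*π/4)) = 0 := by
        rw [show ((4*k:ℝ) - 4*j) * (3*π/4) = ((3*(k-j) : ℕ):ℝ) * π by
          push_cast [Nat.cast_sub hlt.le]; ring]
        exact Real.sin_nat_mul_pi _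
      have hs2 : Real.sin (((4*k:ℝ) - 4*j) * (π/4)) = 0 := by
        rw [show ((4*k:ℝ) - 4*j) * (π/4) = (((k-j) : ℕ):ℝ) * π by
          push_cast [Nat.cast_sub hlt.le]; ring]
        exact Real.sin_nat_mul_pi _
      rw [hs1, hs2]
      simp
    rw [hval k, hval j, hcross, sub_zero]
    have hb : ∀ n : ℕ, (1/2:ℝ)^(8*n+2) ≤ 1/4 := by
      intro n
      calc (1/2:ℝ)^(8*n+2) ≤ (1/2:ℝ)^2 :=
            pow_le_pow_of_le_one (by norm_num) (by norm_num) (by omega)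
        _ = 1/4 := by norm_num
    have hbk := hb k
    have hbj := hb j
    nlinarith
  · intro p hp
    have hrp : 0 < p.1 := lt_trans (by norm_num) hp.1.1
    dsimp only
    rw [norm_sub_sq_cx, norm_useq_polar k p hrp, norm_useq_polar j p hrp, cross_polar]
    ring

/-- The analytic core of the non-compactness theorem: `(u_k)` is bounded in `L²(D, dA)`,
`(s⁻¹ u_k)` is bounded in the weighted space `L²(D, s^m dA)` for `m ≥ 2`, and the `u_k` are
uniformly separated in `L²(D, s^m dA)`. -/
theorem analytic_core (m : ℕ) (hm : 2 ≤ m) :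
    (∃ B : ℝ, ∀ k : ℕ, ∫ ζ in upperHalfDisk, ‖useq k ζ‖ ^ 2 ∂volume ≤ B) ∧
    (∃ B' : ℝ, ∀ k : ℕ,
      ∫ ζ in upperHalfDisk, ‖useq k ζ / (ζ.im : ℂ)‖ ^ 2 * ζ.im ^ m ∂volume ≤ B') ∧
    (∀ k j : ℕ, k ≠ j →
      (Real.sqrt 2 / 4) ^ m * (π / 8)
        ≤ ∫ ζ in upperHalfDisk, ‖useq k ζ - useq j ζ‖ ^ 2 * ζ.im ^ m ∂volume) := by
  refine ⟨⟨π, fun k => le_of_eq (key1 k)⟩, ⟨π, fun k => ?_⟩, fun k j hne => ?_⟩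
  · -- part 2
    have hu : Continuous fun ζ : ℂ => useq k ζ := by unfold useq; fun_prop
    have hcont : Continuous fun ζ : ℂ => ‖useq k ζ‖^2 := by fun_prop
    have hint : IntegrableOn (fun ζ : ℂ => ‖useq k ζ‖^2) upperHalfDisk volume :=
      hcont.continuousOn.integrableOn_compact uhd_compact
    calc ∫ ζ in upperHalfDisk, ‖useq k ζ / (ζ.im : ℂ)‖ ^ 2 * ζ.im ^ m ∂volume
        ≤ ∫ ζ in upperHalfDisk, ‖useq k ζ‖^2 ∂volume := ?_
      _ = π := key1 k
    apply integral_mono_of_nonneg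
    · refine (ae_restrict_iff' uhd_closed.measurableSet).2
        (Filter.Eventually.of_forall fun ζ hζ => ?_)
      simp only [Pi.zero_apply]
      exact mul_nonneg (by positivity) (pow_nonneg hζ.2 m)
    · exact hint
    · refine (ae_restrict_iff' uhd_closed.measurableSet).2
        (Filter.Eventually.of_forall fun ζ hζ => ?_)
      dsimp only
      by_cases hs : ζ.im = 0
      · simp only [hs, Complex.ofReal_zero, zero_pow (show m ≠ 0 by omega), mul_zero]
        positivity
      · have hspos : 0 < ζ.im := lt_of_le_of_ne hζ.2 (Ne.symm hs)
        have him1 : ζ.im ≤ 1 :=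
          le_trans (le_trans (le_abs_self _) (Complex.abs_im_le_norm ζ)) hζ.1
        have hpow : ζ.im ^ m ≤ ζ.im ^ 2 := pow_le_pow_of_le_one hspos.le him1 hm
        rw [norm_div, Complex.norm_real, Real.norm_eq_abs, _root_.abs_of_pos hspos]
        calc (‖useq k ζ‖ / ζ.im)^2 * ζ.im ^ m
            ≤ (‖useq k ζ‖ / ζ.im)^2 * ζ.im ^ 2 :=
              mul_le_mul_of_nonneg_left hpow (by positivity)
          _ = ‖useq k ζ‖^2 := by rw [div_pow]; field_simp
  · -- part 3
    have main : ∀ a b : ℕ, b < a →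
        (Real.sqrt 2 / 4) ^ m * (π / 8)
          ≤ ∫ ζ in upperHalfDisk, ‖useq a ζ - useq b ζ‖ ^ 2 * ζ.im ^ m ∂volume := by
      intro a b hab
      have hpi := Real.pi_pos
      have hconta : Continuous fun ζ : ℂ => useq a ζ := by unfold useq; fun_prop
      have hcontb : Continuous fun ζ : ℂ => useq b ζ := by unfold useq; fun_prop
      have hg : Continuous fun ζ : ℂ => ‖useq a ζ - useq b ζ‖^2 := by fun_prop
      have hgs : Continuous fun ζ : ℂ => ‖useq a ζ - useq b ζ‖^2 * ζ.im ^ m := by fun_prop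
      have hintD : IntegrableOn (fun ζ : ℂ => ‖useq a ζ - useq b ζ‖^2 * ζ.im ^ m)
          upperHalfDisk volume := hgs.continuousOn.integrableOn_compact uhd_compact
      have hint1 : IntegrableOn
          (fun ζ : ℂ => (Real.sqrt 2 / 4) ^ m * ‖useq a ζ - useq b ζ‖^2) sectorE volume :=
        ((continuous_const.mul hg).continuousOn.integrableOn_compact uhd_compact).mono_set sectorE_sub
      have hint2 : IntegrableOn (fun ζ : ℂ => ‖useq a ζ - useq b ζ‖^2 * ζ.im ^ m)
          sectorE volume := hintD.mono_set sectorE_sub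
      have step1 : ∫ ζ in sectorE, ‖useq a ζ - useq b ζ‖^2 * ζ.im ^ m ∂volume
          ≤ ∫ ζ in upperHalfDisk, ‖useq a ζ - useq b ζ‖^2 * ζ.im ^ m ∂volume :=
        setIntegral_mono_set hintD
          ((ae_restrict_iff' uhd_closed.measurableSet).2
            (Filter.Eventually.of_forall fun ζ hζ => by
              simp only [Pi.zero_apply]
              exact mul_nonneg (by positivity) (pow_nonneg hζ.2 m)))
          (HasSubset.Subset.eventuallyLE sectorE_sub)
      have step2 : ∫ ζ in sectorE, (Real.sqrt 2 / 4) ^ m * ‖useq a ζ - useq b ζ‖^2 ∂volume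
          ≤ ∫ ζ in sectorE, ‖useq a ζ - useq b ζ‖^2 * ζ.im ^ m ∂volume := by
        apply setIntegral_mono_on hint1 hint2 sectorE_meas
        intro ζ hζ
        have h2 : Real.sqrt 2 / 2 * ‖ζ‖ ≤ ζ.im := hζ.2.2
        have h3 : 1/2 < ‖ζ‖ := hζ.2.1
        have h1 : Real.sqrt 2 / 4 ≤ ζ.im := by nlinarith [Real.sqrt_nonneg 2]
        have h4 : (Real.sqrt 2 / 4) ^ m ≤ ζ.im ^ m := pow_le_pow_left₀ (by positivity) h1 m
        calc (Real.sqrt 2/4)^m * ‖useq a ζ - useq b ζ‖^2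
            ≤ ζ.im ^ m * ‖useq a ζ - useq b ζ‖^2 :=
              mul_le_mul_of_nonneg_right h4 (by positivity)
          _ = ‖useq a ζ - useq b ζ‖^2 * ζ.im ^ m := mul_comm _ _
      have step3 : (Real.sqrt 2 / 4) ^ m * (π/8)
          ≤ ∫ ζ in sectorE, (Real.sqrt 2 / 4) ^ m * ‖useq a ζ - useq b ζ‖^2 ∂volume := by
        rw [MeasureTheory.integral_const_mul]
        apply mul_le_mul_of_nonneg_left _ (by positivity)
        linarith [key3 a b hab]
      linarith
    rcases lt_or_gt_of_ne hne with h | h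
    · have h' := main j k h
      have hrev : ∀ ζ : ℂ, ‖useq k ζ - useq j ζ‖ = ‖useq j ζ - useq k ζ‖ :=
        fun ζ => norm_sub_rev _ _
      simp_rw [hrev]
      exact h'
    · exact main k j h
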